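/- If λ = (λ_1, ..., λ_n) ∈ Γ_k, then Σ_{i=1}^n λ_i² · σ_{k-1}(λ|i) ≥ (k/n) · σ_1(λ) · σ_k(λ). -/

import Mathlib

open Finset

noncomputable def esym {n : ℕ} (k : ℕ) (lam : Fin n → ℝ) : ℝ :=
  ∑ s ∈ Finset.univ.powersetCard k, ∏ i ∈ s, lam i

noncomputable def esym1 {n : ℕ} (k : ℕ) (lam : Fin n → ℝ) (i : Fin n) : ℝ :=
  ∑ s ∈ (Finset.univ.erase i).powersetCard k, ∏ j ∈ s, lam j

noncomputable def esym2 {n : ℕ} (k : ℕ) (lam : Fin n → ℝ) (i j : Fin n) : ℝ :=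
  ∑ s ∈ ((Finset.univ.erase i).erase j).powersetCard k, ∏ l ∈ s, lam l

def GardingCone (n k : ℕ) : Set (Fin n → ℝ) :=
  {lam | ∀ j : ℕ, 1 ≤ j → j ≤ k → 0 < esym j lam}

open Polynomial

def RR (p : Polynomial ℝ) : Prop := Multiset.card p.roots = p.natDegree

lemma rr_zero : RR 0 := by simp [RR]

lemma rr_C (a : ℝ) : RR (C a) := by simp [RR]

lemma rr_mul {p q : Polynomial ℝ} (hp : RR p) (hq : RR q) : RR (p * q) := by
  rcases eq_or_ne p 0 with rfl | hp0
  · simpa using rr_zero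
  rcases eq_or_ne q 0 with rfl | hq0
  · simpa using rr_zero
  unfold RR at *
  rw [roots_mul (mul_ne_zero hp0 hq0), natDegree_mul hp0 hq0, Multiset.card_add, hp, hq]

lemma rr_X_sub_C (a : ℝ) : RR (X - C a) := by simp [RR]

lemma rr_derivative {p : Polynomial ℝ} (h : RR p) : RR (derivative p) := by
  rcases eq_or_ne (derivative p) 0 with h0 | h0
  · simp [RR, h0]
  have hp0 : p.natDegree ≠ 0 := by
    intro hd
    exact h0 (by rw [eq_C_of_natDegree_eq_zero hd]; simp)
  have h2 := natDegree_derivative_le p (R := ℝ)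
  have hle := card_roots' (derivative p)
  have hge := p.card_roots_le_derivative
  unfold RR at *
  omega

lemma reverse_X_sub_C (a : ℝ) : (X - C a).reverse = 1 - C a * X := by
  ext i
  rw [coeff_reverse]
  have h1 : (X - C a).natDegree = 1 := by simp
  rw [h1]
  match i with
  | 0 => simp
  | 1 => simp [coeff_one]
  | (m+2) => rw [← revAtFun_eq]; simp [revAtFun, revAt, Function.Involutive.toPerm, coeff_one, coeff_C_mul, coeff_X, coeff_C]

lemma rr_one_sub_CX (a : ℝ) : RR (1 - C a * X) := by
  rcases eq_or_ne a 0 with rfl | ha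
  · simpa using rr_C 1
  have : (1 : Polynomial ℝ) - C a * X = C (-a) * (X - C a⁻¹) := by
    rw [mul_sub, ← C_mul, neg_mul, mul_inv_cancel₀ ha, map_neg, map_neg, map_one]
    ring
  rw [this]
  exact rr_mul (rr_C _) (rr_X_sub_C _)

lemma rr_reverse_prod (s : Multiset ℝ) : RR ((s.map fun a => X - C a).prod).reverse := by
  induction s using Multiset.induction with
  | empty => rw [Multiset.map_zero, Multiset.prod_zero, show (1:Polynomial ℝ).reverse = 1 from by simp [reverse]]; simpa using rr_C 1
  | cons a s ih =>
      rw [Multiset.map_cons, Multiset.prod_cons, reverse_mul_of_domain, reverse_X_sub_C]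
      exact rr_mul (rr_one_sub_CX a) ih

lemma rr_reverse {p : Polynomial ℝ} (h : RR p) : RR p.reverse := by
  rcases eq_or_ne p 0 with rfl | hp0
  · simpa using rr_zero
  have hs : Splits p := splits_iff_card_roots.2 h
  have hfac := hs.eq_prod_roots
  rw [hfac, reverse_mul_of_domain]
  have : (C p.leadingCoeff).reverse = C p.leadingCoeff := by
    simp [reverse, reflect_C]
  rw [this]
  exact rr_mul (rr_C _) (rr_reverse_prod _)

lemma rr_iterate_derivative {p : Polynomial ℝ} (h : RR p) (m : ℕ) :
    RR (derivative^[m] p) := by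
  induction m with
  | zero => simpa using h
  | succ m ih => rw [Function.iterate_succ_apply']; exact rr_derivative ih

lemma disc_nonneg {q : Polynomial ℝ} (h : RR q) (hd : q.natDegree ≤ 2) :
    q.coeff 1 ^ 2 ≥ 4 * (q.coeff 2 * q.coeff 0) := by
  rcases lt_or_eq_of_le hd with hd1 | hd2
  · have : q.coeff 2 = 0 := coeff_eq_zero_of_natDegree_lt (by omega)
    rw [this]
    nlinarith [sq_nonneg (q.coeff 1)]
  · have hcard : Multiset.card q.roots = 2 := by rw [h, hd2]
    obtain ⟨r, s, hrs⟩ := Multiset.card_eq_two.1 hcard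
    have hs : Splits q := splits_iff_card_roots.2 h
    have hfac := hs.eq_prod_roots
    rw [hrs] at hfac
    set l := q.leadingCoeff with hl
    have hexp : q = C l * X ^ 2 - C (l * (r + s)) * X + C (l * (r * s)) := by
      conv_lhs => rw [hfac]
      simp only [Multiset.insert_eq_cons, Multiset.map_cons, Multiset.map_singleton,
        Multiset.prod_cons, Multiset.prod_singleton, map_mul, map_add]
      ring
    have c0 : q.coeff 0 = l * (r * s) := by
      rw [hexp]; simp
    have c1 : q.coeff 1 = -(l * (r + s)) := by
      rw [hexp]; simp [coeff_one]
    have c2 : q.coeff 2 = l := by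
      rw [hexp]; simp [coeff_one]
    rw [c0, c1, c2]
    nlinarith [sq_nonneg (l * (r - s))]

lemma rr_one : RR 1 := by simpa using rr_C 1

lemma rr_X_add_C (a : ℝ) : RR (X + C a) := by
  have : X + C a = X - C (-a) := by rw [map_neg, sub_neg_eq_add]
  rw [this]; exact rr_X_sub_C _

lemma desc1 : ∀ i : ℕ, (i+1).descFactorial i = (i+1) * i.descFactorial i := by
  intro i
  induction i with
  | zero => rfl
  | succ i ih =>
      rw [Nat.succ_descFactorial_succ, Nat.succ_descFactorial_succ, ih]

lemma desc2 : ∀ i : ℕ, 2 * (i+2).descFactorial i = (i+2) * (i+1).descFactorial i := by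
  intro i
  induction i with
  | zero => rfl
  | succ i ih =>
      rw [Nat.succ_descFactorial_succ (n := i+2), Nat.succ_descFactorial_succ (n := i+1)]
      calc 2 * ((i + 3) * (i+2).descFactorial i) = (i+3) * (2 * (i+2).descFactorial i) := by ring
       _ = (i+3) * ((i+2) * (i+1).descFactorial i) := by rw [ih]
       _ = (i + 2 + 1) * ((i + 1 + 1) * (i + 1).descFactorial i) := by ring

lemma esym_zero {n : ℕ} (lam : Fin n → ℝ) : esym 0 lam = 1 := by
  simp [esym]


lemma newton {n : ℕ} (lam : Fin n → ℝ) (j : ℕ) (hj : 1 ≤ j) (hjn : j + 1 ≤ n) :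
    ((j:ℝ) * ((n:ℝ) - j)) * esym j lam ^ 2 ≥
      (((j:ℝ) + 1) * ((n:ℝ) - j + 1)) * (esym (j - 1) lam * esym (j + 1) lam) := by
  obtain ⟨i, rfl⟩ : ∃ i, j = i + 1 := ⟨j - 1, by omega⟩
  obtain ⟨m, rfl⟩ : ∃ m, n = i + m + 2 := ⟨n - i - 2, by omega⟩
  set f : Polynomial ℝ := ∏ t : Fin (i+m+2), (X + C (lam t)) with hf
  have hfne : ∀ t ∈ Finset.univ (α := Fin (i+m+2)), X + C (lam t) ≠ 0 :=
    fun t _ => X_add_C_ne_zero (lam t)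
  have hfdeg : f.natDegree = i + m + 2 := by
    rw [hf, natDegree_prod _ _ hfne]
    simp
  have hfc : ∀ u : ℕ, u ≤ i + m + 2 → f.coeff u = esym (i + m + 2 - u) lam := by
    intro u hu
    rw [hf, Finset.prod_X_add_C_coeff _ _ (by simpa using hu)]
    simp only [card_univ, Fintype.card_fin]
    rfl
  have hrrf : RR f := by
    rw [hf]
    refine Finset.prod_induction _ RR (fun a b => rr_mul) rr_one ?_
    exact fun t _ => rr_X_add_C (lam t)
  -- g = m-th derivative, degree i+2
  set g : Polynomial ℝ := derivative^[m] f with hg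
  have hrrg : RR g := rr_iterate_derivative hrrf _
  have hgc : ∀ u : ℕ, g.coeff u = ((u + m).descFactorial m : ℝ) * f.coeff (u + m) := by
    intro u
    rw [hg, coeff_iterate_derivative, nsmul_eq_mul]
  have hgtop : g.coeff (i + 2) = ((i+2+m).descFactorial m : ℝ) := by
    rw [hgc, hfc _ (by omega)]
    have h4 : i + m + 2 - (i + 2 + m) = 0 := by omega
    rw [h4, esym_zero, mul_one]
  have hgdeg : g.natDegree = i + 2 := by
    have hle := natDegree_iterate_derivative f m
    rw [← hg, hfdeg] at hle
    have hne : g.coeff (i+2) ≠ 0 := by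
      rw [hgtop]
      have : (i+2+m).descFactorial m ≠ 0 := by
        rw [Ne, Nat.descFactorial_eq_zero_iff_lt]; omega
      exact_mod_cast this
    have := le_natDegree_of_ne_zero hne
    omega
  -- h = reverse of g
  set h : Polynomial ℝ := g.reverse with hh
  have hrrh : RR h := rr_reverse hrrg
  have hhc : ∀ u : ℕ, u ≤ i + 2 → h.coeff u = g.coeff (i + 2 - u) := by
    intro u hu
    rw [hh, coeff_reverse, hgdeg, revAt_le hu]
  have hhdeg : h.natDegree ≤ i + 2 := by
    rw [hh]
    exact (reverse_natDegree_le g).trans (le_of_eq hgdeg)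
  -- q = i-th derivative of h: quadratic
  set q : Polynomial ℝ := derivative^[i] h with hq
  have hrrq : RR q := rr_iterate_derivative hrrh _
  have hqdeg : q.natDegree ≤ 2 := by
    have h1 := natDegree_iterate_derivative h i
    rw [← hq] at h1
    omega
  have hqc : ∀ u : ℕ, q.coeff u = ((u + i).descFactorial i : ℝ) * h.coeff (u + i) := by
    intro u
    rw [hq, coeff_iterate_derivative, nsmul_eq_mul]
  have hdisc := disc_nonneg hrrq hqdeg
  -- unfold the three coefficients
  have e0 : q.coeff 0 = (i.descFactorial i : ℝ) *
      (((m+2).descFactorial m : ℝ) * esym i lam) := by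
    rw [hqc, hhc _ (by omega)]
    have h2 : i + 2 - (0 + i) = 2 := by omega
    rw [h2, hgc, hfc _ (by omega)]
    have h4 : i + m + 2 - (2 + m) = i := by omega
    rw [h4, show (2+m) = (m+2) from Nat.add_comm 2 m]
    norm_num
  have e1 : q.coeff 1 = ((i+1).descFactorial i : ℝ) *
      (((m+1).descFactorial m : ℝ) * esym (i+1) lam) := by
    rw [hqc, hhc _ (by omega)]
    have h2 : i + 2 - (1 + i) = 1 := by omega
    rw [h2, hgc, hfc _ (by omega)]
    have h4 : i + m + 2 - (1 + m) = i + 1 := by omega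
    rw [h4, show (1+m) = (m+1) from Nat.add_comm 1 m]
    norm_num [add_comm 1 i]
  have e2 : q.coeff 2 = ((i+2).descFactorial i : ℝ) *
      ((m.descFactorial m : ℝ) * esym (i+2) lam) := by
    rw [hqc, hhc _ (by omega)]
    have h2 : i + 2 - (2 + i) = 0 := by omega
    rw [h2, hgc, hfc _ (by omega)]
    have h4 : i + m + 2 - (0 + m) = i + 2 := by omega
    rw [h4]
    norm_num [add_comm 2 i]
  rw [e0, e1, e2] at hdisc
  -- arithmetic clean-up
  have d1 : ((i+1).descFactorial i : ℝ) = (i+1) * (i.descFactorial i : ℝ) := by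
    exact_mod_cast congrArg (Nat.cast : ℕ → ℝ) (desc1 i)
  have d2 : 2 * ((i+2).descFactorial i : ℝ) = (i+2) * ((i+1).descFactorial i : ℝ) := by
    exact_mod_cast congrArg (Nat.cast : ℕ → ℝ) (desc2 i)
  have f1 : ((m+1).descFactorial m : ℝ) = (m+1) * (m.descFactorial m : ℝ) := by
    exact_mod_cast congrArg (Nat.cast : ℕ → ℝ) (desc1 m)
  have f2 : 2 * ((m+2).descFactorial m : ℝ) = (m+2) * ((m+1).descFactorial m : ℝ) := by
    exact_mod_cast congrArg (Nat.cast : ℕ → ℝ) (desc2 m)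
  have hd0 : (0:ℝ) < (i.descFactorial i : ℝ) := by
    have : i.descFactorial i ≠ 0 := by rw [Ne, Nat.descFactorial_eq_zero_iff_lt]; omega
    positivity
  have he0 : (0:ℝ) < (m.descFactorial m : ℝ) := by
    have : m.descFactorial m ≠ 0 := by rw [Ne, Nat.descFactorial_eq_zero_iff_lt]; omega
    positivity
  -- goal in terms of i, m
  have hj1 : ((i:ℝ) + 1 + 1 : ℝ) = (i+2 : ℝ) := by ring
  push_cast
  set A := esym (i+1) lam
  set B := esym i lam
  set D := esym (i+2) lam
  set d0 := (i.descFactorial i : ℝ)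
  set e0' := (m.descFactorial m : ℝ)
  rw [d1, f1] at hdisc
  -- replace (i+2) and (m+2) descFactorials
  have key : ((i:ℝ)+1)^2 * (m+1)^2 * d0^2 * e0'^2 * A^2 ≥
      (i+2)*(m+2)*((i:ℝ)+1)*((m:ℝ)+1) * d0^2 * e0'^2 * (D * B) := by
    have expand : (4:ℝ) * (((i+2).descFactorial i : ℝ) * (e0' * D) *
        (d0 * (((m+2).descFactorial m : ℝ) * B)))
        = (2 * ((i+2).descFactorial i : ℝ)) * (2 * ((m+2).descFactorial m : ℝ)) *
          (d0 * e0' * (D * B)) := by ring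
    calc ((i:ℝ)+1)^2 * (m+1)^2 * d0^2 * e0'^2 * A^2
        = (((i:ℝ)+1) * d0 * (((m:ℝ)+1) * e0' * A))^2 := by ring
      _ ≥ 4 * (((i+2).descFactorial i : ℝ) * (e0' * D) *
            (d0 * (((m+2).descFactorial m : ℝ) * B))) := hdisc
      _ = (2 * ((i+2).descFactorial i : ℝ)) * (2 * ((m+2).descFactorial m : ℝ)) *
          (d0 * e0' * (D * B)) := by ring
      _ = ((i+2) * (((i:ℝ)+1) * d0)) * ((m+2) * (((m:ℝ)+1) * e0')) *
          (d0 * e0' * (D * B)) := by rw [d2, f2, d1, f1]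
      _ = (i+2)*(m+2)*((i:ℝ)+1)*((m:ℝ)+1) * d0^2 * e0'^2 * (D * B) := by ring
  -- divide by positive stuff
  have hpos : (0:ℝ) < ((i:ℝ)+1) * ((m:ℝ)+1) * d0^2 * e0'^2 := by positivity
  have goal2 : ((i:ℝ)+1) * ((m:ℝ)+1) * A^2 ≥ ((i:ℝ)+2) * ((m:ℝ)+2) * (D * B) := by
    nlinarith [key, hpos]
  calc ((i:ℝ)+1) * (((i:ℝ) + m + 2) - ((i:ℝ)+1)) * A^2
      = ((i:ℝ)+1) * ((m:ℝ)+1) * A^2 := by ring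
    _ ≥ ((i:ℝ)+2) * ((m:ℝ)+2) * (D * B) := goal2
    _ = (((i:ℝ)+1) + 1) * (((i:ℝ) + m + 2) - ((i:ℝ)+1) + 1) * (B * D) := by ring

lemma esym_split {n : ℕ} (m : ℕ) (lam : Fin n → ℝ) (i : Fin n) :
    esym (m+1) lam = esym1 (m+1) lam i + lam i * esym1 m lam i := by
  classical
  have hins : (Finset.univ : Finset (Fin n)) = insert i (Finset.univ.erase i) :=
    (Finset.insert_erase (Finset.mem_univ i)).symm
  have hnotmem : i ∉ Finset.univ.erase i := Finset.notMem_erase i _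
  rw [esym, hins, Finset.powersetCard_succ_insert hnotmem]
  have hdisj : Disjoint ((Finset.univ.erase i).powersetCard (m+1))
      (((Finset.univ.erase i).powersetCard m).image (insert i)) := by
    rw [Finset.disjoint_right]
    intro s hs hs'
    obtain ⟨t, ht, rfl⟩ := Finset.mem_image.1 hs
    have h1 : insert i t ⊆ Finset.univ.erase i := (Finset.mem_powersetCard.1 hs').1
    exact hnotmem (h1 (Finset.mem_insert_self i t))
  rw [Finset.sum_union hdisj]
  congr 1
  have hinj : ∀ s ∈ (Finset.univ.erase i).powersetCard m,
      ∀ t ∈ (Finset.univ.erase i).powersetCard m, insert i s = insert i t → s = t := by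
    intro s hs t ht hst
    have hs' : i ∉ s := fun hmem => hnotmem ((Finset.mem_powersetCard.1 hs).1 hmem)
    have ht' : i ∉ t := fun hmem => hnotmem ((Finset.mem_powersetCard.1 ht).1 hmem)
    rw [← Finset.erase_insert hs', ← Finset.erase_insert ht', hst]
  rw [Finset.sum_image hinj, esym1, Finset.mul_sum]
  apply Finset.sum_congr rfl
  intro s hs
  have hnot : i ∉ s := fun hmem =>
    hnotmem ((Finset.mem_powersetCard.1 hs).1 hmem)
  rw [Finset.prod_insert hnot]

lemma esym1_total {n : ℕ} (r : ℕ) (lam : Fin n → ℝ) :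
    ∑ i, esym1 r lam i = ((n - r : ℕ) : ℝ) * esym r lam := by
  classical
  have hcomm : ∑ i : Fin n, ∑ s ∈ (Finset.univ.erase i).powersetCard r, ∏ j ∈ s, lam j
      = ∑ s ∈ Finset.univ.powersetCard r, ∑ i ∈ sᶜ, ∏ j ∈ s, lam j := by
    apply Finset.sum_comm'
    intro i s
    simp only [Finset.mem_univ, true_and, Finset.mem_powersetCard, Finset.mem_compl,
      Finset.subset_erase, Finset.subset_univ, and_true, true_and]
    try tauto
  rw [show (∑ i, esym1 r lam i) = _ from hcomm, esym, Finset.mul_sum]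
  apply Finset.sum_congr rfl
  intro s hs
  rw [Finset.sum_const, nsmul_eq_mul]
  congr 2
  rw [Finset.card_compl, (Finset.mem_powersetCard.1 hs).2]
  simp

lemma esym_one {n : ℕ} (lam : Fin n → ℝ) : esym 1 lam = ∑ i, lam i := by
  rw [esym, Finset.powersetCard_one, Finset.sum_map]
  simp

lemma esym_gt {n : ℕ} (r : ℕ) (hr : n < r) (lam : Fin n → ℝ) : esym r lam = 0 := by
  rw [esym, Finset.powersetCard_eq_empty.2 (by simpa using hr), Finset.sum_empty]

lemma sum_lam_esym1 {n : ℕ} (m : ℕ) (lam : Fin n → ℝ) :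
    ∑ i, lam i * esym1 m lam i = ((m:ℝ)+1) * esym (m+1) lam := by
  have hstep : ∀ i, lam i * esym1 m lam i = esym (m+1) lam - esym1 (m+1) lam i := by
    intro i
    have h := esym_split m lam i
    linarith
  simp_rw [hstep]
  rw [Finset.sum_sub_distrib, Finset.sum_const, esym1_total, Finset.card_univ,
    Fintype.card_fin, nsmul_eq_mul]
  by_cases h : m + 1 ≤ n
  · rw [Nat.cast_sub h]
    push_cast
    ring
  · rw [esym_gt (m+1) (by omega) lam]
    ring

lemma newtonP {n : ℕ} (lam : Fin n → ℝ) (j : ℕ) (hj : 1 ≤ j) (hjn : j + 1 ≤ n) :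
    (esym j lam / (n.choose j : ℝ)) ^ 2 ≥
      (esym (j-1) lam / (n.choose (j-1) : ℝ)) * (esym (j+1) lam / (n.choose (j+1) : ℝ)) := by
  have hc : (0:ℝ) < (n.choose j : ℝ) := by exact_mod_cast Nat.choose_pos (by omega)
  have hcm : (0:ℝ) < (n.choose (j-1) : ℝ) := by exact_mod_cast Nat.choose_pos (by omega)
  have hcp : (0:ℝ) < (n.choose (j+1) : ℝ) := by exact_mod_cast Nat.choose_pos (by omega)
  set c := (n.choose j : ℝ)
  set cm := (n.choose (j-1) : ℝ)
  set cp := (n.choose (j+1) : ℝ)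
  have id1 : cp * ((j:ℝ)+1) = c * ((n:ℝ) - j) := by
    have h := Nat.choose_succ_right_eq n j
    have h2 : ((n.choose (j+1) * (j+1) : ℕ) : ℝ) = ((n.choose j * (n - j) : ℕ) : ℝ) := by
      exact_mod_cast congrArg (Nat.cast : ℕ → ℝ) h
    push_cast [Nat.cast_sub (by omega : j ≤ n)] at h2
    convert h2 using 2 <;> push_cast <;> ring
  have id2 : c * (j:ℝ) = cm * ((n:ℝ) - j + 1) := by
    have h := Nat.choose_succ_right_eq n (j-1)
    have hj' : j - 1 + 1 = j := by omega
    rw [hj'] at h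
    have h2 : ((n.choose j * j : ℕ) : ℝ) = ((n.choose (j-1) * (n - (j-1)) : ℕ) : ℝ) := by
      exact_mod_cast congrArg (Nat.cast : ℕ → ℝ) h
    push_cast [Nat.cast_sub (by omega : j - 1 ≤ n)] at h2
    rw [h2]
    congr 1
    have : ((j - 1 : ℕ) : ℝ) = (j:ℝ) - 1 := by
      rw [Nat.cast_sub (by omega : 1 ≤ j)]; norm_num
    rw [this]; ring
  have idc : ((j:ℝ)+1) * ((n:ℝ)-(j:ℝ)+1) * (cm * cp) = (j:ℝ) * ((n:ℝ)-(j:ℝ)) * c^2 := by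
    have e1 : (cm * ((n:ℝ) - j + 1)) * (cp * ((j:ℝ)+1)) = (c * (j:ℝ)) * (c * ((n:ℝ) - j)) := by
      rw [← id1, ← id2]
    nlinarith [e1]
  have hnewt := newton lam j hj hjn
  set A := esym j lam
  set B := esym (j-1) lam
  set D := esym (j+1) lam
  rw [ge_iff_le, div_mul_div_comm, div_pow, div_le_div_iff₀ (by positivity) (by positivity)]
  -- B * D * c^2 ≤ A^2 * (cm * cp)
  have hx : (j:ℝ) * ((n:ℝ)-j) > 0 := by
    have : (j:ℝ) + 1 ≤ (n:ℝ) := by exact_mod_cast hjn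
    have hj' : (1:ℝ) ≤ (j:ℝ) := by exact_mod_cast hj
    nlinarith
  have key : ((j:ℝ) * ((n:ℝ)-j)) * (A^2 * (cm*cp)) ≥ ((j:ℝ) * ((n:ℝ)-j)) * (B * D * c^2) := by
    calc ((j:ℝ) * ((n:ℝ)-j)) * (A^2 * (cm*cp)) = (((j:ℝ) * ((n:ℝ) - (j:ℝ))) * A ^ 2) * (cm*cp) := by
          ring
      _ ≥ ((((j:ℝ)+1) * ((n:ℝ)-(j:ℝ)+1)) * (B * D)) * (cm*cp) := by
          apply mul_le_mul_of_nonneg_right hnewt (by positivity)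
      _ = (((j:ℝ)+1) * ((n:ℝ)-(j:ℝ)+1) * (cm * cp)) * (B * D) := by ring
      _ = ((j:ℝ) * ((n:ℝ)-(j:ℝ)) * c^2) * (B * D) := by rw [idc]
      _ = ((j:ℝ) * ((n:ℝ)-j)) * (B * D * c^2) := by ring
  exact le_of_mul_le_mul_left key hx

lemma chain {n k : ℕ} (hk : 1 ≤ k) (hkn : k ≤ n) (lam : Fin n → ℝ)
    (hpos : ∀ j : ℕ, 1 ≤ j → j ≤ k → 0 < esym j lam) :
    ((n:ℝ) - k) * (esym 1 lam * esym k lam) ≥ (n:ℝ) * ((k:ℝ)+1) * esym (k+1) lam := by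
  rcases eq_or_lt_of_le hkn with rfl | hlt
  · rw [esym_gt (k+1) (by omega) lam]
    simp
  -- k < n
  set P : ℕ → ℝ := fun j => esym j lam / (n.choose j : ℝ) with hP
  have hchoosepos : ∀ j : ℕ, j ≤ n → (0:ℝ) < (n.choose j : ℝ) := by
    intro j hj; exact_mod_cast Nat.choose_pos hj
  have hP0 : P 0 = 1 := by
    simp [hP, esym_zero]
  have hPpos : ∀ j : ℕ, j ≤ k → 0 < P j := by
    intro j hj
    rcases Nat.eq_zero_or_pos j with rfl | hj1
    · rw [hP0]; norm_num
    · exact div_pos (hpos j hj1 hj) (hchoosepos j (by omega))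
  have claim : ∀ m : ℕ, 1 ≤ m → m ≤ k + 1 → P m ≤ P 1 * P (m-1) := by
    intro m
    induction m with
    | zero => omega
    | succ m ih =>
        intro _ hmk
        rcases Nat.eq_zero_or_pos m with rfl | hm1
        · rw [show (0+1) - 1 = 0 from rfl, hP0, mul_one]
        have hihyp : P m ≤ P 1 * P (m-1) := ih hm1 (by omega)
        have hnewt := newtonP lam m hm1 (by omega)
        have hPm : 0 < P m := hPpos m (by omega)
        have hPm1 : 0 < P (m-1) := hPpos (m-1) (by omega)
        have hstep : P (m+1) ≤ P 1 * P m := by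
          nlinarith [hnewt, hihyp, hPm, hPm1, mul_le_mul_of_nonneg_right hihyp hPm.le]
        simpa using hstep
  have hfinal := claim (k+1) (by omega) le_rfl
  simp only [Nat.add_sub_cancel] at hfinal
  -- unfold P
  have hc : (0:ℝ) < (n.choose k : ℝ) := hchoosepos k hkn
  have hcp : (0:ℝ) < (n.choose (k+1) : ℝ) := hchoosepos (k+1) (by omega)
  have hn1 : (0:ℝ) < (n.choose 1 : ℝ) := hchoosepos 1 (by omega)
  have hch1 : (n.choose 1 : ℝ) = n := by rw [Nat.choose_one_right]
  have idk : (n.choose (k+1) : ℝ) * ((k:ℝ)+1) = (n.choose k : ℝ) * ((n:ℝ) - k) := by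
    have h := Nat.choose_succ_right_eq n k
    have h2 : ((n.choose (k+1) * (k+1) : ℕ) : ℝ) = ((n.choose k * (n - k) : ℕ) : ℝ) := by
      exact_mod_cast congrArg (Nat.cast : ℕ → ℝ) h
    push_cast [Nat.cast_sub hkn] at h2
    exact_mod_cast h2
  simp only [hP] at hfinal
  rw [hch1] at hfinal
  set c := (n.choose k : ℝ)
  set cp := (n.choose (k+1) : ℝ)
  set S1 := esym 1 lam
  set Sk := esym k lam
  set Sp := esym (k+1) lam
  -- hfinal : Sp / cp ≤ S1 / n * (Sk / c)
  have hnpos : (0:ℝ) < n := by exact_mod_cast (by omega : 0 < n)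
  have h3 : Sp * ((n:ℝ) * c) ≤ S1 * Sk * cp := by
    have := mul_le_mul_of_nonneg_right hfinal (by positivity : (0:ℝ) ≤ cp * ((n:ℝ) * c))
    calc Sp * ((n:ℝ) * c) = (Sp / cp) * (cp * ((n:ℝ) * c)) := by field_simp
      _ ≤ (S1 / n * (Sk / c)) * (cp * ((n:ℝ) * c)) := this
      _ = S1 * Sk * cp := by field_simp
  -- multiply by (k+1) and use idk
  have h4 : Sp * ((n:ℝ) * c) * ((k:ℝ)+1) ≤ S1 * Sk * (c * ((n:ℝ) - k)) := by
    calc Sp * ((n:ℝ) * c) * ((k:ℝ)+1) ≤ S1 * Sk * cp * ((k:ℝ)+1) := by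
          apply mul_le_mul_of_nonneg_right h3 (by positivity)
      _ = S1 * Sk * (cp * ((k:ℝ)+1)) := by ring
      _ = S1 * Sk * (c * ((n:ℝ) - k)) := by rw [idk]
  rw [ge_iff_le]
  have h5 : (n:ℝ) * ((k:ℝ)+1) * Sp * c ≤ ((n:ℝ) - (k:ℝ)) * (S1 * Sk) * c := by
    calc (n:ℝ) * ((k:ℝ)+1) * Sp * c = Sp * ((n:ℝ) * c) * ((k:ℝ)+1) := by ring
      _ ≤ S1 * Sk * (c * ((n:ℝ) - k)) := h4
      _ = ((n:ℝ) - (k:ℝ)) * (S1 * Sk) * c := by ring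
  exact le_of_mul_le_mul_right h5 hc

theorem stmt6 {n : ℕ} (k : ℕ) (hk : 1 ≤ k) (hkn : k ≤ n) (lam : Fin n → ℝ)
    (hG : lam ∈ GardingCone n k) :
    ∑ i : Fin n, (lam i) ^ 2 * esym1 (k - 1) lam i ≥
      ((k : ℝ) / n) * esym 1 lam * esym k lam := by
  have hpos : ∀ j : ℕ, 1 ≤ j → j ≤ k → 0 < esym j lam := hG
  have hk1 : k - 1 + 1 = k := by omega
  have hsplit : ∀ i, lam i ^ 2 * esym1 (k-1) lam i
      = lam i * esym k lam - lam i * esym1 k lam i := by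
    intro i
    have h := esym_split (k-1) lam i
    rw [hk1] at h
    have : lam i * esym1 (k-1) lam i = esym k lam - esym1 k lam i := by linarith
    calc lam i ^ 2 * esym1 (k-1) lam i = lam i * (lam i * esym1 (k-1) lam i) := by ring
      _ = lam i * (esym k lam - esym1 k lam i) := by rw [this]
      _ = lam i * esym k lam - lam i * esym1 k lam i := by ring
  simp_rw [hsplit]
  rw [Finset.sum_sub_distrib, ← Finset.sum_mul, ← esym_one, sum_lam_esym1]
  -- goal : esym 1 * esym k - (k+1) * esym (k+1) ≥ k/n * esym 1 * esym k
  have hch := chain hk hkn lam hpos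
  have hn : (0:ℝ) < n := by exact_mod_cast (by omega : 0 < n)
  rw [ge_iff_le, div_mul_eq_mul_div, div_mul_eq_mul_div, div_le_iff₀ hn]
  set S1 := esym 1 lam
  set Sk := esym k lam
  set Sp := esym (k+1) lam
  -- hch : (n - k) * (S1 * Sk) ≥ n * (k+1) * Sp
  nlinarith [hch]
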